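/- arXiv:1611.05073 — 2 statements merged into one kernel-verified Lean document; each statement's English description precedes it below -/
import Mathlib

section
/- Let P ∈ ℝ^{q²} with ‖P‖ < ε, let σ > 0 satisfy σq < ε, and let ξ, ξ' be independent ℝ^{q²}-valued random vectors with i.i.d. N(0,1) coordinates. Then Pr(‖P + σ(ξ − ξ')‖ < 2ε) > (1 + 8σ²(ε² + σ²q²)/(3ε² − 2σ²q²)²)^{-1}. -/
open MeasureTheory ProbabilityTheory
open Real Filter
open scoped NNReal ENNReal


local notation "gexp" => fun x : ℝ => Real.exp (-(1/2) * x ^ 2)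

lemma RID_aux_integrable_pow_gauss (n : ℕ) :
    Integrable (fun x : ℝ => x ^ n * Real.exp (-(1/2) * x ^ 2)) := by
  have h1 : Integrable (fun x : ℝ => Real.exp (1/2) * Real.exp (-(1/2) * (x - 1) ^ 2)) :=
    ((integrable_exp_neg_mul_sq (by norm_num : (0:ℝ) < 1/2)).comp_sub_right 1).const_mul _
  have h2 : Integrable (fun x : ℝ => Real.exp (1/2) * Real.exp (-(1/2) * (x + 1) ^ 2)) := by
    have := ((integrable_exp_neg_mul_sq (by norm_num : (0:ℝ) < 1/2)).comp_sub_right (-1)).const_mul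
      (Real.exp (1/2))
    simpa [sub_neg_eq_add] using this
  have hbound : Integrable (fun x : ℝ =>
      (n.factorial : ℝ) * (Real.exp (1/2) * Real.exp (-(1/2) * (x - 1) ^ 2)
        + Real.exp (1/2) * Real.exp (-(1/2) * (x + 1) ^ 2))) := (h1.add h2).const_mul _
  refine hbound.mono' (Continuous.aestronglyMeasurable (by continuity)) ?_
  refine ae_of_all _ fun x => ?_
  have habs : |x| ^ n ≤ (n.factorial : ℝ) * Real.exp |x| := by
    have := Real.pow_div_factorial_le_exp |x| (abs_nonneg x) n
    have hf : (0:ℝ) < (n.factorial : ℝ) := by positivity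
    calc |x| ^ n = |x| ^ n / (n.factorial : ℝ) * (n.factorial : ℝ) := by field_simp
    _ ≤ Real.exp |x| * (n.factorial : ℝ) := by
        apply mul_le_mul_of_nonneg_right this hf.le
    _ = _ := by ring
  have hexp : Real.exp (|x| - (1/2) * x ^ 2) ≤
      Real.exp (1/2) * Real.exp (-(1/2) * (x - 1) ^ 2)
        + Real.exp (1/2) * Real.exp (-(1/2) * (x + 1) ^ 2) := by
    rcases abs_cases x with ⟨h, _⟩ | ⟨h, _⟩
    · rw [h]
      have : Real.exp (x - (1/2) * x ^ 2) = Real.exp (1/2) * Real.exp (-(1/2) * (x - 1) ^ 2) := by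
        rw [← Real.exp_add]; ring_nf
      rw [this]
      have : (0:ℝ) < Real.exp (1/2) * Real.exp (-(1/2) * (x + 1) ^ 2) := by positivity
      linarith
    · rw [h]
      have : Real.exp (-x - (1/2) * x ^ 2) = Real.exp (1/2) * Real.exp (-(1/2) * (x + 1) ^ 2) := by
        rw [← Real.exp_add]; ring_nf
      rw [this]
      have : (0:ℝ) < Real.exp (1/2) * Real.exp (-(1/2) * (x - 1) ^ 2) := by positivity
      linarith
  have : ‖x ^ n * Real.exp (-(1/2) * x ^ 2)‖ = |x| ^ n * Real.exp (-(1/2) * x ^ 2) := by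
    rw [norm_mul, Real.norm_eq_abs, Real.norm_eq_abs, abs_pow, abs_of_pos (Real.exp_pos _)]
  rw [this]
  calc |x| ^ n * Real.exp (-(1/2) * x ^ 2)
      ≤ (n.factorial : ℝ) * Real.exp |x| * Real.exp (-(1/2) * x ^ 2) := by
        apply mul_le_mul_of_nonneg_right habs (Real.exp_pos _).le
    _ = (n.factorial : ℝ) * Real.exp (|x| - (1/2) * x ^ 2) := by
        rw [mul_assoc, ← Real.exp_add]; ring_nf
    _ ≤ _ := by
        apply mul_le_mul_of_nonneg_left hexp (by positivity)

lemma RID_aux_tendsto_pow_gauss_top (n : ℕ) :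
    Tendsto (fun x : ℝ => x ^ n * Real.exp (-(1/2) * x ^ 2)) atTop (nhds 0) := by
  have h := rpow_mul_exp_neg_mul_sq_isLittleO_exp_neg (by norm_num : (0:ℝ) < 1/2) (n : ℝ)
  have h2 : (fun x : ℝ => x ^ n * Real.exp (-(1/2) * x ^ 2))
      =O[atTop] fun x : ℝ => Real.exp (-(1/2) * x) := by
    refine (Asymptotics.IsBigO.congr' (h.isBigO) ?_ (EventuallyEq.refl _ _))
    filter_upwards [eventually_gt_atTop (0:ℝ)] with x hx
    rw [Real.rpow_natCast]
  have h0 : Tendsto (fun x : ℝ => (1/2 : ℝ) * x) atTop atTop :=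
    Tendsto.const_mul_atTop (show (0:ℝ) < 1/2 by norm_num) tendsto_id
  have h5 : Tendsto (fun x : ℝ => Real.exp (-(1/2) * x)) atTop (nhds 0) := by
    simpa using h0
  exact h2.trans_tendsto h5

lemma RID_aux_tendsto_pow_gauss_bot (n : ℕ) :
    Tendsto (fun x : ℝ => x ^ n * Real.exp (-(1/2) * x ^ 2)) atBot (nhds 0) := by
  have h := (RID_aux_tendsto_pow_gauss_top n).comp tendsto_neg_atBot_atTop
  have heq : (fun x : ℝ => x ^ n * Real.exp (-(1/2) * x ^ 2))
      = fun x : ℝ => (-1 : ℝ) ^ n * ((-x) ^ n * Real.exp (-(1/2) * (-x) ^ 2)) := by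
    funext x; ring_nf; rw [mul_comm n 2, pow_mul]; norm_num
  rw [heq]
  simpa using (h.const_mul ((-1 : ℝ) ^ n))

lemma RID_aux_gauss_rec (n : ℕ) :
    ∫ x : ℝ, x ^ (n + 2) * Real.exp (-(1/2) * x ^ 2)
      = (n + 1 : ℝ) * ∫ x : ℝ, x ^ n * Real.exp (-(1/2) * x ^ 2) := by
  have hderiv : ∀ x : ℝ, HasDerivAt (fun x => -(x ^ (n + 1) * Real.exp (-(1/2) * x ^ 2)))
      (x ^ (n + 2) * Real.exp (-(1/2) * x ^ 2)
        - (n + 1 : ℝ) * (x ^ n * Real.exp (-(1/2) * x ^ 2))) x := by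
    intro x
    have he : HasDerivAt (fun x : ℝ => Real.exp (-(1/2) * x ^ 2))
        (Real.exp (-(1/2) * x ^ 2) * (-(1/2) * (2 * x))) x := by
      have := ((hasDerivAt_pow 2 x).const_mul (-(1/2) : ℝ)).exp
      simpa using this
    have hp : HasDerivAt (fun x : ℝ => x ^ (n + 1)) ((n + 1 : ℝ) * x ^ n) x := by
      simpa using hasDerivAt_pow (n + 1) x
    have := (hp.mul he).neg
    refine this.congr_deriv ?_
    push_cast
    ring
  have hint : Integrable (fun x : ℝ => x ^ (n + 2) * Real.exp (-(1/2) * x ^ 2)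
      - (n + 1 : ℝ) * (x ^ n * Real.exp (-(1/2) * x ^ 2))) :=
    (RID_aux_integrable_pow_gauss (n + 2)).sub ((RID_aux_integrable_pow_gauss n).const_mul _)
  have hbot : Tendsto (fun x : ℝ => -(x ^ (n + 1) * Real.exp (-(1/2) * x ^ 2))) atBot (nhds 0) := by
    have := (RID_aux_tendsto_pow_gauss_bot (n + 1)).neg
    simpa using this
  have htop : Tendsto (fun x : ℝ => -(x ^ (n + 1) * Real.exp (-(1/2) * x ^ 2))) atTop (nhds 0) := by
    have := (RID_aux_tendsto_pow_gauss_top (n + 1)).neg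
    simpa using this
  have h0 : ∫ x : ℝ, (x ^ (n + 2) * Real.exp (-(1/2) * x ^ 2)
      - (n + 1 : ℝ) * (x ^ n * Real.exp (-(1/2) * x ^ 2))) = 0 - 0 :=
    integral_of_hasDerivAt_of_tendsto hderiv hint hbot htop
  rw [integral_sub (RID_aux_integrable_pow_gauss (n + 2))
      ((RID_aux_integrable_pow_gauss n).const_mul _)] at h0
  rw [MeasureTheory.integral_const_mul] at h0
  linarith
lemma RID_aux_odd_zero (n : ℕ) :
    ∫ x : ℝ, x ^ (2 * n + 1) * Real.exp (-(1/2) * x ^ 2) = 0 := by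
  have h := integral_neg_eq_self (fun x : ℝ => x ^ (2 * n + 1) * Real.exp (-(1/2) * x ^ 2)) volume
  have h2 : (fun x : ℝ => (-x) ^ (2 * n + 1) * Real.exp (-(1/2) * (-x) ^ 2))
      = fun x : ℝ => -(x ^ (2 * n + 1) * Real.exp (-(1/2) * x ^ 2)) := by
    funext x
    rw [Odd.neg_pow ⟨n, by ring⟩, neg_sq]
    ring
  rw [h2] at h
  rw [integral_neg] at h
  linarith

lemma RID_aux_E0 : ∫ x : ℝ, Real.exp (-(1/2) * x ^ 2) = √(2 * π) := by
  have := integral_gaussian (1/2)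
  rw [show π / (1/2 : ℝ) = 2 * π by ring] at this
  exact this

lemma RID_aux_E2 : ∫ x : ℝ, x ^ 2 * Real.exp (-(1/2) * x ^ 2) = √(2 * π) := by
  have h := RID_aux_gauss_rec 0
  simp only [Nat.cast_zero, zero_add, pow_zero, one_mul] at h
  rw [h]; exact RID_aux_E0

lemma RID_aux_E4 : ∫ x : ℝ, x ^ 4 * Real.exp (-(1/2) * x ^ 2) = 3 * √(2 * π) := by
  have h := RID_aux_gauss_rec 2
  rw [show (2+2 : ℕ) = 4 from rfl] at h
  rw [h, RID_aux_E2]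
  norm_num

lemma RID_aux_gauss_integral (f : ℝ → ℝ) :
    ∫ x, f x ∂(gaussianReal 0 1)
      = (√(2 * π))⁻¹ * ∫ x, f x * Real.exp (-(1/2) * x ^ 2) := by
  rw [gaussianReal_of_var_ne_zero 0 one_ne_zero]
  have hpdf : (gaussianPDF 0 1)
      = fun x => ((Real.toNNReal (gaussianPDFReal 0 1 x) : ℝ≥0) : ℝ≥0∞) := rfl
  rw [hpdf, integral_withDensity_eq_integral_smul
    ((measurable_gaussianPDFReal 0 1).real_toNNReal) f]
  have : (fun x => Real.toNNReal (gaussianPDFReal 0 1 x) • f x)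
      = fun x => (√(2 * π))⁻¹ * (f x * Real.exp (-(1/2) * x ^ 2)) := by
    funext x
    rw [NNReal.smul_def, Real.coe_toNNReal _ (gaussianPDFReal_nonneg 0 1 x)]
    unfold gaussianPDFReal
    push_cast
    rw [smul_eq_mul]
    rw [show -(x - 0) ^ 2 / (2 * 1) = -(1/2) * x ^ 2 by ring]
    ring_nf
  rw [this, MeasureTheory.integral_const_mul]

lemma RID_aux_integrable_pow_gaussianReal (n : ℕ) :
    Integrable (fun x : ℝ => x ^ n) (gaussianReal 0 1) := by
  rw [gaussianReal_of_var_ne_zero 0 one_ne_zero]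
  rw [integrable_withDensity_iff (measurable_gaussianPDF 0 1)
    (ae_of_all _ fun x => ENNReal.ofReal_lt_top)]
  have : (fun x : ℝ => x ^ n * (gaussianPDF 0 1 x).toReal)
      = fun x => (√(2 * π))⁻¹ * (x ^ n * Real.exp (-(1/2) * x ^ 2)) := by
    funext x
    rw [gaussianPDF, ENNReal.toReal_ofReal (gaussianPDFReal_nonneg 0 1 x)]
    unfold gaussianPDFReal
    push_cast
    rw [show -(x - 0) ^ 2 / (2 * 1) = -(1/2) * x ^ 2 by ring]
    ring_nf
  rw [this]
  exact (RID_aux_integrable_pow_gauss n).const_mul _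

lemma RID_aux_sqrt_two_pi_pos : (0:ℝ) < √(2 * π) :=
  Real.sqrt_pos.mpr (by positivity)

lemma RID_aux_moment1 : ∫ x, x ∂(gaussianReal 0 1) = 0 := by
  rw [RID_aux_gauss_integral (fun x => x)]
  have h1 := RID_aux_odd_zero 0
  rw [show 2*0+1 = 1 from rfl] at h1
  simp only [pow_one] at h1
  rw [h1, mul_zero]

lemma RID_aux_moment2 : ∫ x, x ^ 2 ∂(gaussianReal 0 1) = 1 := by
  rw [RID_aux_gauss_integral (fun x => x ^ 2), RID_aux_E2]
  exact inv_mul_cancel₀ RID_aux_sqrt_two_pi_pos.ne'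

lemma RID_aux_moment3 : ∫ x, x ^ 3 ∂(gaussianReal 0 1) = 0 := by
  rw [RID_aux_gauss_integral (fun x => x ^ 3)]
  have h1 := RID_aux_odd_zero 1
  rw [show 2*1+1 = 3 from rfl] at h1
  rw [h1, mul_zero]

lemma RID_aux_moment4 : ∫ x, x ^ 4 ∂(gaussianReal 0 1) = 3 := by
  rw [RID_aux_gauss_integral (fun x => x ^ 4), RID_aux_E4]
  rw [← mul_assoc, mul_comm _ (3:ℝ), mul_assoc, inv_mul_cancel₀ RID_aux_sqrt_two_pi_pos.ne',
    mul_one]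

section RVs
variable {Ω : Type*} [MeasureSpace Ω] [IsProbabilityMeasure (ℙ : Measure Ω)]

lemma RID_aux_aemeasurable {X : Ω → ℝ} (h : Measure.map X ℙ = gaussianReal 0 1) :
    AEMeasurable X ℙ := by
  by_contra hc
  rw [Measure.map_of_not_aemeasurable hc] at h
  exact (IsProbabilityMeasure.ne_zero (gaussianReal 0 1)) h.symm

lemma RID_aux_integrable_pow_rv {X : Ω → ℝ} (h : Measure.map X ℙ = gaussianReal 0 1) (n : ℕ) :
    Integrable (fun ω => X ω ^ n) ℙ := by
  have haem := RID_aux_aemeasurable h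
  have hsm : AEStronglyMeasurable (fun x : ℝ => x ^ n) (Measure.map X ℙ) :=
    (measurable_id.pow_const n).aestronglyMeasurable
  have := (integrable_map_measure hsm haem).mp (by rw [h]; exact RID_aux_integrable_pow_gaussianReal n)
  exact this

lemma RID_aux_integral_pow_rv {X : Ω → ℝ} (h : Measure.map X ℙ = gaussianReal 0 1) (n : ℕ) :
    ∫ ω, X ω ^ n ∂ℙ = ∫ x, x ^ n ∂(gaussianReal 0 1) := by
  have haem := RID_aux_aemeasurable h
  have hsm : AEStronglyMeasurable (fun x : ℝ => x ^ n) (Measure.map X ℙ) :=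
    (measurable_id.pow_const n).aestronglyMeasurable
  rw [← integral_map haem hsm, h]

/-- moments of the standard gaussian, for n ≤ 4 -/
noncomputable def RID_m : ℕ → ℝ := fun n =>
  if n = 0 then 1 else if n = 1 then 0 else if n = 2 then 1 else if n = 3 then 0 else 3

lemma RID_aux_moment_rv {X : Ω → ℝ} (h : Measure.map X ℙ = gaussianReal 0 1) (n : ℕ)
    (hn : n ≤ 4) : ∫ ω, X ω ^ n ∂ℙ = RID_m n := by
  rw [RID_aux_integral_pow_rv h n]
  interval_cases n
  · simp [RID_m]
  · simpa [RID_m] using RID_aux_moment1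
  · simpa [RID_m] using RID_aux_moment2
  · simpa [RID_m] using RID_aux_moment3
  · simpa [RID_m] using RID_aux_moment4

section coord
variable {U V : Ω → ℝ} (hU : Measure.map U ℙ = gaussianReal 0 1)
  (hV : Measure.map V ℙ = gaussianReal 0 1) (hUV : ProbabilityTheory.IndepFun U V ℙ)

include hU hV hUV in
lemma RID_aux_mono (i j : ℕ) (hi : i ≤ 4) (hj : j ≤ 4) :
    Integrable (fun ω => U ω ^ i * V ω ^ j) ℙ
      ∧ ∫ ω, U ω ^ i * V ω ^ j ∂ℙ = RID_m i * RID_m j := by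
  have hind : ProbabilityTheory.IndepFun (fun ω => U ω ^ i) (fun ω => V ω ^ j) ℙ :=
    hUV.comp (measurable_id.pow_const i) (measurable_id.pow_const j)
  have hUi := RID_aux_integrable_pow_rv hU i
  have hVj := RID_aux_integrable_pow_rv hV j
  have hint : Integrable (fun ω => U ω ^ i * V ω ^ j) ℙ := hind.integrable_mul hUi hVj
  refine ⟨hint, ?_⟩
  have := hind.integral_mul_eq_mul_integral hUi.aestronglyMeasurable hVj.aestronglyMeasurable
  rw [show ((fun ω => U ω ^ i) * fun ω => V ω ^ j) = fun ω => U ω ^ i * V ω ^ j from rfl] at this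
  rw [this, RID_aux_moment_rv hU i hi, RID_aux_moment_rv hV j hj]

end coord

/-- combination helpers -/
lemma RID_ad {f g : Ω → ℝ} {a b : ℝ} (hf : Integrable f ℙ ∧ ∫ ω, f ω ∂ℙ = a)
    (hg : Integrable g ℙ ∧ ∫ ω, g ω ∂ℙ = b) :
    Integrable (fun ω => f ω + g ω) ℙ ∧ ∫ ω, (f ω + g ω) ∂ℙ = a + b :=
  ⟨hf.1.add hg.1, by rw [integral_add hf.1 hg.1, hf.2, hg.2]⟩

lemma RID_cm {f : Ω → ℝ} {a : ℝ} (hf : Integrable f ℙ ∧ ∫ ω, f ω ∂ℙ = a) (c : ℝ) :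
    Integrable (fun ω => c * f ω) ℙ ∧ ∫ ω, c * f ω ∂ℙ = c * a :=
  ⟨hf.1.const_mul c, by rw [MeasureTheory.integral_const_mul, hf.2]⟩

end RVs

section Wmom
variable {Ω : Type*} [MeasureSpace Ω] [IsProbabilityMeasure (ℙ : Measure Ω)]
variable {U V : Ω → ℝ} (hU : Measure.map U ℙ = gaussianReal 0 1)
  (hV : Measure.map V ℙ = gaussianReal 0 1) (hUV : ProbabilityTheory.IndepFun U V ℙ)
  (p σ : ℝ)

include hU hV hUV in
lemma RID_aux_W2 :
    Integrable (fun ω => (p + σ * (U ω - V ω)) ^ 2) ℙ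
      ∧ ∫ ω, (p + σ * (U ω - V ω)) ^ 2 ∂ℙ = p ^ 2 + 2 * σ ^ 2 := by
  have mono := RID_aux_mono hU hV hUV
  have h := RID_ad (RID_cm (mono 0 0 (by norm_num) (by norm_num)) (p^2))
    (RID_ad (RID_cm (mono 1 0 (by norm_num) (by norm_num)) (2*p*σ))
    (RID_ad (RID_cm (mono 0 1 (by norm_num) (by norm_num)) (-(2*p*σ)))
    (RID_ad (RID_cm (mono 2 0 (by norm_num) (by norm_num)) (σ^2))
    (RID_ad (RID_cm (mono 1 1 (by norm_num) (by norm_num)) (-(2*σ^2)))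
            (RID_cm (mono 0 2 (by norm_num) (by norm_num)) (σ^2))))))
  have e2 : (fun ω => (p + σ * (U ω - V ω)) ^ 2)
      = fun ω => p^2 * (U ω ^ 0 * V ω ^ 0) + ((2*p*σ) * (U ω ^ 1 * V ω ^ 0)
        + ((-(2*p*σ)) * (U ω ^ 0 * V ω ^ 1) + (σ^2 * (U ω ^ 2 * V ω ^ 0)
        + ((-(2*σ^2)) * (U ω ^ 1 * V ω ^ 1) + σ^2 * (U ω ^ 0 * V ω ^ 2))))) := by
    funext ω; ring
  constructor
  · rw [e2]; exact h.1
  · rw [e2, h.2]; simp [RID_m]; ring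

include hU hV hUV in
lemma RID_aux_W4 :
    Integrable (fun ω => (p + σ * (U ω - V ω)) ^ 4) ℙ
      ∧ ∫ ω, (p + σ * (U ω - V ω)) ^ 4 ∂ℙ
        = p ^ 4 + 12 * p ^ 2 * σ ^ 2 + 12 * σ ^ 4 := by
  have mono := RID_aux_mono hU hV hUV
  have h := (RID_ad (RID_cm (mono 0 0 (by norm_num) (by norm_num)) (p^4))
    (RID_ad (RID_cm (mono 1 0 (by norm_num) (by norm_num)) (4*p^3*σ))
    (RID_ad (RID_cm (mono 0 1 (by norm_num) (by norm_num)) (-(4*p^3*σ)))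
    (RID_ad (RID_cm (mono 2 0 (by norm_num) (by norm_num)) (6*p^2*σ^2))
    (RID_ad (RID_cm (mono 1 1 (by norm_num) (by norm_num)) (-(12*p^2*σ^2)))
    (RID_ad (RID_cm (mono 0 2 (by norm_num) (by norm_num)) (6*p^2*σ^2))
    (RID_ad (RID_cm (mono 3 0 (by norm_num) (by norm_num)) (4*p*σ^3))
    (RID_ad (RID_cm (mono 2 1 (by norm_num) (by norm_num)) (-(12*p*σ^3)))
    (RID_ad (RID_cm (mono 1 2 (by norm_num) (by norm_num)) (12*p*σ^3))
    (RID_ad (RID_cm (mono 0 3 (by norm_num) (by norm_num)) (-(4*p*σ^3)))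
    (RID_ad (RID_cm (mono 4 0 (by norm_num) (by norm_num)) (σ^4))
    (RID_ad (RID_cm (mono 3 1 (by norm_num) (by norm_num)) (-(4*σ^4)))
    (RID_ad (RID_cm (mono 2 2 (by norm_num) (by norm_num)) (6*σ^4))
    (RID_ad (RID_cm (mono 1 3 (by norm_num) (by norm_num)) (-(4*σ^4)))
    (RID_cm (mono 0 4 (by norm_num) (by norm_num)) (σ^4))))))))))))))))
  have e4 : (fun ω => (p + σ * (U ω - V ω)) ^ 4)
      = fun ω => (p^4) * (U ω ^ 0 * V ω ^ 0) + ((4*p^3*σ) * (U ω ^ 1 * V ω ^ 0) + ((-(4*p^3*σ)) * (U ω ^ 0 * V ω ^ 1) + ((6*p^2*σ^2) * (U ω ^ 2 * V ω ^ 0) + ((-(12*p^2*σ^2)) * (U ω ^ 1 * V ω ^ 1) + ((6*p^2*σ^2) * (U ω ^ 0 * V ω ^ 2) + ((4*p*σ^3) * (U ω ^ 3 * V ω ^ 0) + ((-(12*p*σ^3)) * (U ω ^ 2 * V ω ^ 1) + ((12*p*σ^3) * (U ω ^ 1 * V ω ^ 2) + ((-(4*p*σ^3)) * (U ω ^ 0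 * V ω ^ 3) + ((σ^4) * (U ω ^ 4 * V ω ^ 0) + ((-(4*σ^4)) * (U ω ^ 3 * V ω ^ 1) + ((6*σ^4) * (U ω ^ 2 * V ω ^ 2) + ((-(4*σ^4)) * (U ω ^ 1 * V ω ^ 3) + ((σ^4) * (U ω ^ 0 * V ω ^ 4))))))))))))))) := by
    funext ω; ring
  constructor
  · rw [e4]; exact h.1
  · rw [e4, h.2]; simp [RID_m]; ring
end Wmom

section Cantelli
variable {Ω : Type*} [MeasureSpace Ω] [IsProbabilityMeasure (ℙ : Measure Ω)]

lemma RID_cantelli {X : Ω → ℝ} (hX : MemLp X 2 ℙ) {t : ℝ} (ht : 0 < t) :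
    (ℙ {ω | (∫ x, X x ∂ℙ) + t ≤ X ω}).toReal
      ≤ variance X ℙ / (variance X ℙ + t ^ 2) := by
  set m := ∫ x, X x ∂ℙ with hm
  set V := variance X ℙ with hVdefn
  have hV : 0 ≤ V := variance_nonneg _ _
  set u := V / t with hu
  have hu0 : 0 ≤ u := div_nonneg hV ht.le
  have hXi : Integrable X ℙ := hX.integrable one_le_two
  have hX2 : Integrable (fun ω => X ω ^ 2) ℙ := hX.integrable_sq
  have hexp : (fun ω => (X ω - m + u) ^ 2)
      = fun ω => X ω ^ 2 + ((2 * (u - m)) * X ω + (m - u) ^ 2) := by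
    funext ω; ring
  have hYint : Integrable (fun ω => (X ω - m + u) ^ 2) ℙ := by
    rw [hexp]; exact hX2.add ((hXi.const_mul _).add (integrable_const _))
  have hVd : V = ∫ ω, X ω ^ 2 ∂ℙ - m ^ 2 := by
    have := variance_eq_sub hX
    simpa [Pi.pow_apply] using this
  have hga : Integrable (fun ω => 2 * (u - m) * X ω) ℙ := hXi.const_mul _
  have hgb : Integrable (fun ω => 2 * (u - m) * X ω + (m - u) ^ 2) ℙ :=
    hga.add (integrable_const _)
  have hYval : ∫ ω, (X ω - m + u) ^ 2 ∂ℙ = V + u ^ 2 := by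
    rw [hexp, integral_add hX2 hgb, integral_add hga (integrable_const _),
      MeasureTheory.integral_const_mul, integral_const, smul_eq_mul, probReal_univ,
      one_mul]
    have h2 : ∫ ω, X ω ^ 2 ∂ℙ = V + m ^ 2 := by linarith
    rw [h2, ← hm]
    ring
  have hsub : {ω | m + t ≤ X ω} ⊆ {ω | (t + u) ^ 2 ≤ (X ω - m + u) ^ 2} := by
    intro ω hω
    simp only [Set.mem_setOf_eq] at *
    exact pow_le_pow_left₀ (by linarith) (by linarith) 2
  have hmark := mul_meas_ge_le_integral_of_nonneg
    (ae_of_all ℙ fun ω => sq_nonneg (X ω - m + u)) hYint ((t + u) ^ 2)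
  have htu : 0 < t + u := by linarith
  have hmeasle : (ℙ {ω | m + t ≤ X ω}).toReal
      ≤ (ℙ {ω | (t + u) ^ 2 ≤ (X ω - m + u) ^ 2}).toReal :=
    ENNReal.toReal_mono (measure_ne_top _ _) (measure_mono hsub)
  have key : (ℙ {ω | m + t ≤ X ω}).toReal ≤ (V + u ^ 2) / (t + u) ^ 2 := by
    rw [le_div_iff₀ (by positivity)]
    calc (ℙ {ω | m + t ≤ X ω}).toReal * (t + u) ^ 2
        ≤ (ℙ {ω | (t + u) ^ 2 ≤ (X ω - m + u) ^ 2}).toReal * (t + u) ^ 2 := by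
          apply mul_le_mul_of_nonneg_right hmeasle (by positivity)
      _ ≤ ∫ ω, (X ω - m + u) ^ 2 ∂ℙ := by rw [mul_comm]; exact hmark
      _ = V + u ^ 2 := hYval
  have halg : (V + u ^ 2) / (t + u) ^ 2 = V / (V + t ^ 2) := by
    rw [hu]
    have ht' : t ≠ 0 := ht.ne'
    have h1 : t + V / t ≠ 0 := by positivity
    have h2 : V + t ^ 2 ≠ 0 := by positivity
    field_simp
    ring
  rw [← halg]
  exact key

end Cantelli

section Congr
variable {Ω : Type*} [MeasureSpace Ω] [IsProbabilityMeasure (ℙ : Measure Ω)]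

lemma RID_iIndepFun_congr {ι : Type*} {β : Type*} [m : MeasurableSpace β] {f g : ι → Ω → β}
    (h : ProbabilityTheory.iIndepFun f ℙ) (hfg : ∀ i, f i =ᵐ[ℙ] g i) :
    ProbabilityTheory.iIndepFun g ℙ := by
  rw [ProbabilityTheory.iIndepFun_iff_measure_inter_preimage_eq_mul] at h ⊢
  intro S sets hsets
  have hae : ∀ᵐ ω ∂ℙ, ∀ i : S, (f i ω ∈ sets i ↔ g i ω ∈ sets i) := by
    rw [MeasureTheory.ae_all_iff]
    intro i
    filter_upwards [hfg i] with ω hω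
    rw [hω]
  have h1 : ∀ i ∈ S, ℙ (f i ⁻¹' sets i) = ℙ (g i ⁻¹' sets i) := by
    intro i hi
    apply measure_congr
    rw [Filter.eventuallyEq_set]
    filter_upwards [hfg i] with ω hω
    simp [Set.mem_preimage, hω]
  have h2 : ℙ (⋂ i ∈ S, g i ⁻¹' sets i) = ℙ (⋂ i ∈ S, f i ⁻¹' sets i) := by
    apply measure_congr
    rw [Filter.eventuallyEq_set]
    filter_upwards [hae] with ω hω
    simp only [Set.mem_iInter, Set.mem_preimage]
    exact ⟨fun H i hi => (hω ⟨i, hi⟩).mpr (H i hi), fun H i hi => (hω ⟨i, hi⟩).mp (H i hi)⟩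
  rw [h2, h S hsets]
  exact Finset.prod_congr rfl h1

end Congr

lemma RID_final_arith {B d V t : ℝ} (hBpos : 0 < B) (hdpos : 0 < d) (hdt : d < t)
    (hV0 : 0 ≤ V) (hVB : V < B) : (1 + B / d ^ 2)⁻¹ < 1 - V / (V + t ^ 2) := by
  have htpos : 0 < t := hdpos.trans hdt
  have h1 : (1 + B / d ^ 2)⁻¹ = d ^ 2 / (d ^ 2 + B) := by
    rw [eq_div_iff (by positivity)]
    field_simp
  have h2 : 1 - V / (V + t ^ 2) = t ^ 2 / (V + t ^ 2) := by
    field_simp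
    ring
  rw [h1, h2, div_lt_div_iff₀ (by positivity) (by positivity)]
  have hd2t2 : d ^ 2 < t ^ 2 := by nlinarith
  have e1 : d ^ 2 * V ≤ d ^ 2 * B := mul_le_mul_of_nonneg_left hVB.le (by positivity)
  have e2 : d ^ 2 * B < t ^ 2 * B := mul_lt_mul_of_pos_right hd2t2 hBpos
  nlinarith [e1, e2]

/-- For P ∈ ℝ^{q²} with ‖P‖ < ε, σ > 0 with σq < ε, and independent
i.i.d. standard Gaussian noise vectors ξ, ξ',
Pr(‖P + σ(ξ − ξ')‖ < 2ε) > (1 + 8σ²(ε² + σ²q²)/(3ε² − 2σ²q²)²)⁻¹. -/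
theorem RID_close_neighbors_bound
    {Ω : Type*} [MeasureSpace Ω] [IsProbabilityMeasure (ℙ : Measure Ω)]
    (q : ℕ) (σ ε : ℝ) (hσ : 0 < σ) (hε : 0 < ε)
    (P : Fin (q ^ 2) → ℝ) (ξ ξ' : Fin (q ^ 2) → Ω → ℝ)
    (hgauss : ∀ i : Fin (q ^ 2) ⊕ Fin (q ^ 2),
      Measure.map (Sum.elim ξ ξ' i) ℙ = gaussianReal 0 1)
    (hind : iIndepFun (Sum.elim ξ ξ') ℙ)
    (hP : Real.sqrt (∑ a, (P a) ^ 2) < ε)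
    (hσq : σ * (q : ℝ) < ε) :
    (1 + 8 * σ ^ 2 * (ε ^ 2 + σ ^ 2 * (q : ℝ) ^ 2)
        / (3 * ε ^ 2 - 2 * σ ^ 2 * (q : ℝ) ^ 2) ^ 2)⁻¹
      < (ℙ {ω | Real.sqrt (∑ a, (P a + σ * (ξ a ω - ξ' a ω)) ^ 2) < 2 * ε}).toReal := by
  classical
  -- measurable modifications
  have haem : ∀ i : Fin (q ^ 2) ⊕ Fin (q ^ 2), AEMeasurable (Sum.elim ξ ξ' i) ℙ :=
    fun i => RID_aux_aemeasurable (hgauss i)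
  set F : (Fin (q ^ 2) ⊕ Fin (q ^ 2)) → Ω → ℝ := fun i => (haem i).mk _ with hF
  have hFmeas : ∀ i, Measurable (F i) := fun i => (haem i).measurable_mk
  have hFae : ∀ i, Sum.elim ξ ξ' i =ᵐ[ℙ] F i := fun i => (haem i).ae_eq_mk
  have hFgauss : ∀ i, Measure.map (F i) ℙ = gaussianReal 0 1 := fun i => by
    rw [← Measure.map_congr (hFae i)]; exact hgauss i
  have hFind : iIndepFun F ℙ := RID_iIndepFun_congr hind hFae
  -- per-coordinate squares
  set Z : Fin (q ^ 2) → Ω → ℝ :=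
    fun a ω => (P a + σ * (F (Sum.inl a) ω - F (Sum.inr a) ω)) ^ 2 with hZ
  have hUV : ∀ a, IndepFun (F (Sum.inl a)) (F (Sum.inr a)) ℙ :=
    fun a => hFind.indepFun (by simp)
  have hW2 := fun a =>
    RID_aux_W2 (hFgauss (Sum.inl a)) (hFgauss (Sum.inr a)) (hUV a) (P a) σ
  have hW4 := fun a =>
    RID_aux_W4 (hFgauss (Sum.inl a)) (hFgauss (Sum.inr a)) (hUV a) (P a) σ
  have hZmeas : ∀ a, Measurable (Z a) := fun a =>
    (measurable_const.add
      (((hFmeas (Sum.inl a)).sub (hFmeas (Sum.inr a))).const_mul σ)).pow_const 2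
  have hZsq : ∀ a, ((Z a) ^ 2 : Ω → ℝ)
      = fun ω => (P a + σ * (F (Sum.inl a) ω - F (Sum.inr a) ω)) ^ 4 := fun a => by
    funext ω; simp only [Pi.pow_apply, hZ]; ring
  have hZl2 : ∀ a, MemLp (Z a) 2 ℙ := fun a => by
    refine (memLp_two_iff_integrable_sq (hZmeas a).aestronglyMeasurable).mpr ?_
    have := (hW4 a).1
    have heq : (fun ω => Z a ω ^ 2)
        = fun ω => (P a + σ * (F (Sum.inl a) ω - F (Sum.inr a) ω)) ^ 4 := by
      funext ω; simp only [hZ]; ring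
    rw [heq]; exact this
  -- pairwise independence of the Z's
  have hZind : Set.Pairwise ↑(Finset.univ : Finset (Fin (q ^ 2)))
      (fun a b => IndepFun (Z a) (Z b) ℙ) := by
    intro a _ b _ hab
    have h := hFind.indepFun_prodMk_prodMk hFmeas
      (Sum.inl a) (Sum.inr a) (Sum.inl b) (Sum.inr b)
      (by simp [hab]) (by simp) (by simp) (by simp [hab])
    have h2 := h.comp
      (show Measurable (fun r : ℝ × ℝ => (P a + σ * (r.1 - r.2)) ^ 2) from
        (measurable_const.add ((measurable_fst.sub measurable_snd).const_mul σ)).pow_const 2)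
      (show Measurable (fun r : ℝ × ℝ => (P b + σ * (r.1 - r.2)) ^ 2) from
        (measurable_const.add ((measurable_fst.sub measurable_snd).const_mul σ)).pow_const 2)
    exact h2
  -- expectation and variance of the sum
  set m : ℝ := (∑ a, (P a) ^ 2) + 2 * σ ^ 2 * (q : ℝ) ^ 2 with hm
  have hES : ∫ x, (∑ a, Z a) x ∂ℙ = m := by
    simp only [Finset.sum_apply]
    rw [integral_finset_sum Finset.univ (fun a _ => (hW2 a).1)]
    rw [Finset.sum_congr rfl (fun a _ => (hW2 a).2)]
    rw [Finset.sum_add_distrib, Finset.sum_const, Finset.card_univ, Fintype.card_fin, hm]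
    push_cast
    ring
  set V : ℝ := variance (∑ a, Z a) ℙ with hV
  have hSl2 : MemLp (∑ a, Z a) 2 ℙ := memLp_finsetSum' _ (fun i _ => hZl2 i)
  have hvar : V = 8 * σ ^ 2 * (∑ a, (P a) ^ 2) + 8 * σ ^ 4 * (q : ℝ) ^ 2 := by
    rw [hV, IndepFun.variance_sum (fun i _ => hZl2 i) hZind]
    have hzv : ∀ a, variance (Z a) ℙ = 8 * σ ^ 2 * (P a) ^ 2 + 8 * σ ^ 4 := fun a => by
      rw [variance_eq_sub (hZl2 a), hZsq a]
      have h4 := (hW4 a).2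
      have h2 := (hW2 a).2
      rw [h4]
      rw [show ∫ x, Z a x ∂ℙ = (P a) ^ 2 + 2 * σ ^ 2 from h2]
      ring
    rw [Finset.sum_congr rfl (fun a _ => hzv a), Finset.sum_add_distrib, Finset.sum_const,
      Finset.card_univ, Fintype.card_fin, ← Finset.mul_sum]
    push_cast
    ring
  -- numeric facts
  have hP2 : (∑ a, (P a) ^ 2) < ε ^ 2 := (Real.sqrt_lt' hε).mp hP
  have hP2nn : (0:ℝ) ≤ ∑ a, (P a) ^ 2 := Finset.sum_nonneg fun a _ => sq_nonneg _
  have hσq2 : σ ^ 2 * (q : ℝ) ^ 2 < ε ^ 2 := by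
    nlinarith [mul_nonneg hσ.le (Nat.cast_nonneg q)]
  have hqnn : (0:ℝ) ≤ σ ^ 2 * (q : ℝ) ^ 2 := by positivity
  set t : ℝ := 4 * ε ^ 2 - m with htdef
  have htpos : 0 < t := by rw [htdef, hm]; nlinarith
  have htgt : 3 * ε ^ 2 - 2 * σ ^ 2 * (q : ℝ) ^ 2 < t := by rw [htdef, hm]; nlinarith
  have hdpos : 0 < 3 * ε ^ 2 - 2 * σ ^ 2 * (q : ℝ) ^ 2 := by nlinarith
  have hV0 : 0 ≤ V := variance_nonneg _ _
  have hVlt : V < 8 * σ ^ 2 * (ε ^ 2 + σ ^ 2 * (q : ℝ) ^ 2) := by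
    rw [hvar]
    have h8 : 8 * σ ^ 2 * (∑ a, (P a) ^ 2) < 8 * σ ^ 2 * ε ^ 2 :=
      mul_lt_mul_of_pos_left hP2 (by positivity)
    nlinarith [h8]
  -- Cantelli
  have hcant := RID_cantelli hSl2 htpos
  rw [hES] at hcant
  -- event identification
  set A : Set Ω :=
    {ω | Real.sqrt (∑ a, (P a + σ * (F (Sum.inl a) ω - F (Sum.inr a) ω)) ^ 2) < 2 * ε} with hA
  have hAmeas : MeasurableSet A := by
    apply measurableSet_lt
    · apply Measurable.sqrt
      apply Finset.measurable_sum
      intro a _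
      exact (measurable_const.add
        (((hFmeas (Sum.inl a)).sub (hFmeas (Sum.inr a))).const_mul σ)).pow_const 2
    · exact measurable_const
  have hAev : ℙ {ω | Real.sqrt (∑ a, (P a + σ * (ξ a ω - ξ' a ω)) ^ 2) < 2 * ε} = ℙ A := by
    apply measure_congr
    rw [Filter.eventuallyEq_set]
    have hae : ∀ᵐ ω ∂ℙ, ∀ i : Fin (q ^ 2) ⊕ Fin (q ^ 2), Sum.elim ξ ξ' i ω = F i ω := by
      rw [MeasureTheory.ae_all_iff]; exact hFae
    filter_upwards [hae] with ω hω
    have hsum : (∑ a, (P a + σ * (ξ a ω - ξ' a ω)) ^ 2)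
        = ∑ a, (P a + σ * (F (Sum.inl a) ω - F (Sum.inr a) ω)) ^ 2 := by
      apply Finset.sum_congr rfl
      intro a _
      rw [show ξ a ω = Sum.elim ξ ξ' (Sum.inl a) ω from rfl,
        show ξ' a ω = Sum.elim ξ ξ' (Sum.inr a) ω from rfl, hω (Sum.inl a), hω (Sum.inr a)]
    simp only [hA, Set.mem_setOf_eq, hsum]
  have hcompl : {ω | m + t ≤ (∑ a, Z a) ω} = Aᶜ := by
    ext ω
    simp only [hA, Set.mem_compl_iff, Set.mem_setOf_eq, not_lt, Finset.sum_apply, hZ]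
    have h4 : m + t = (2 * ε) ^ 2 := by rw [htdef]; ring
    rw [h4]
    have := (Real.sqrt_lt' (by positivity : (0:ℝ) < 2 * ε)
      (x := ∑ a, (P a + σ * (F (Sum.inl a) ω - F (Sum.inr a) ω)) ^ 2)).not
    constructor
    · intro hle
      exact le_of_not_gt (fun hlt => absurd ((Real.sqrt_lt' (by positivity)).mp hlt)
        (not_lt.mpr hle))
    · intro hle
      by_contra hlt
      exact absurd ((Real.sqrt_lt' (by positivity)).mpr (lt_of_not_ge hlt)) (not_lt.mpr hle)
  rw [hcompl] at hcant
  -- probability lower bound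
  have hprob : 1 - V / (V + t ^ 2) ≤ (ℙ A).toReal := by
    have hc := prob_compl_eq_one_sub hAmeas (μ := ℙ)
    have hc2 : (ℙ Aᶜ).toReal = 1 - (ℙ A).toReal := by
      rw [hc, ENNReal.toReal_sub_of_le prob_le_one ENNReal.one_ne_top, ENNReal.toReal_one]
    have := hcant
    rw [hc2] at this
    linarith
  rw [hAev]
  exact lt_of_lt_of_le (RID_final_arith (by positivity) hdpos htgt hV0 hVlt) hprob
end

section
/- Let L^{(n)} and L^{(c)} be two vector fields (gradients of smoothed noisy and clean patches) at a point x such that E[‖∇L^{(n)}(x) − ∇L^{(c)}(x)‖²] = σ²/(4π) and Var(‖∇L^{(n)}(x) − ∇L^{(c)}(x)‖²) = (σ⁴/(16π²))(1 + 27/(16π)). Then for every k > 0, Pr( |‖∇L^{(n)}(x)‖ − ‖∇L^{(c)}(x)‖| < σ √((1 + 1.25k)/(4π)) ) > 1 − 1/(1 + k²). -/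
open MeasureTheory ProbabilityTheory Real

/-- One-sided Chebyshev (Cantelli) inequality. -/
lemma cantelli_aux {Ω : Type*} [MeasureSpace Ω] [IsProbabilityMeasure (ℙ : Measure Ω)]
    {X : Ω → ℝ} (hX : MemLp X 2 ℙ) {a : ℝ} (ha : 0 < a) :
    (ℙ {ω | (∫ ω, X ω ∂ℙ) + a ≤ X ω}).toReal
      ≤ variance X ℙ / (variance X ℙ + a ^ 2) := by
  set m := ∫ ω, X ω ∂ℙ with hm
  set v := variance X ℙ with hv
  have hv0 : 0 ≤ v := variance_nonneg _ _
  set t := v / a with ht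
  have ht0 : 0 ≤ t := div_nonneg hv0 ha.le
  set Y : Ω → ℝ := fun ω => X ω - (m - t) with hYdef
  have hYp : MemLp Y 2 ℙ := hX.sub (memLp_const _)
  have hfint : Integrable (fun ω => Y ω ^ 2) ℙ := hYp.integrable_sq
  have hXint : Integrable X ℙ := hX.integrable one_le_two
  have hsq : Integrable (fun ω => X ω ^ 2) ℙ := hX.integrable_sq
  have hEf : ∫ ω, Y ω ^ 2 ∂ℙ = v + t ^ 2 := by
    have hvd : v = (∫ ω, X ω ^ 2 ∂ℙ) - m ^ 2 := by
      rw [hv, variance_eq_sub hX]; rfl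
    have : ∀ ω, Y ω ^ 2 = X ω ^ 2 - (2 * (m - t)) * X ω + (m - t) ^ 2 := fun ω => by
      simp only [hYdef]; ring
    simp only [this]
    have h1 : Integrable (fun ω => X ω ^ 2 - 2 * (m - t) * X ω) ℙ :=
      hsq.sub (hXint.const_mul _)
    rw [integral_add h1 (integrable_const _),
      integral_sub hsq (hXint.const_mul _), integral_const_mul, integral_const]
    simp only [measure_univ, probReal_univ, ENNReal.toReal_one, smul_eq_mul, one_mul, ← hm]
    have : ∫ ω, X ω ^ 2 ∂ℙ = v + m ^ 2 := by rw [hvd]; ring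
    rw [this]; ring
  have hmarkov := mul_meas_ge_le_integral_of_nonneg
    (ae_of_all _ fun ω => sq_nonneg (Y ω)) hfint ((a + t) ^ 2)
  rw [hEf] at hmarkov
  have hsub : {ω | m + a ≤ X ω} ⊆ {ω | (a + t) ^ 2 ≤ Y ω ^ 2} := by
    intro ω hω
    simp only [Set.mem_setOf_eq] at hω ⊢
    have h1 : a + t ≤ Y ω := by simp only [hYdef]; linarith
    exact pow_le_pow_left₀ (by linarith) h1 2
  have hmono : (ℙ {ω | m + a ≤ X ω}).toReal ≤ (ℙ {ω | (a + t) ^ 2 ≤ Y ω ^ 2}).toReal :=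
    ENNReal.toReal_mono (measure_ne_top _ _) (measure_mono hsub)
  have hat : 0 < a + t := by linarith
  have key : (ℙ {ω | m + a ≤ X ω}).toReal ≤ (v + t ^ 2) / (a + t) ^ 2 := by
    rw [le_div_iff₀ (by positivity)]
    calc (ℙ {ω | m + a ≤ X ω}).toReal * (a + t) ^ 2
        ≤ (ℙ {ω | (a + t) ^ 2 ≤ Y ω ^ 2}).toReal * (a + t) ^ 2 := by
          apply mul_le_mul_of_nonneg_right hmono (by positivity)
      _ ≤ v + t ^ 2 := by rw [mul_comm]; exact hmarkov
  refine key.trans (le_of_eq ?_)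
  rw [ht]
  rw [div_eq_div_iff (by positivity) (by positivity)]
  field_simp
  ring

/-- Corollary 4.7: if the gradient perturbation ∇L⁽ⁿ⁾(x) − ∇L⁽ᶜ⁾(x)
has E[‖·‖²] = σ²/(4π) and Var(‖·‖²) = (σ⁴/(16π²))(1 + 27/(16π)), then for every k > 0,
Pr(|‖∇L⁽ⁿ⁾(x)‖ − ‖∇L⁽ᶜ⁾(x)‖| < σ√((1 + 1.25k)/(4π))) > 1 − 1/(1 + k²). -/
theorem gradient_magnitude_robustness
    {Ω : Type*} [MeasureSpace Ω] [IsProbabilityMeasure (ℙ : Measure Ω)]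
    (σ : ℝ) (hσ : 0 < σ)
    (Dn : Ω → EuclideanSpace ℝ (Fin 2)) (Dc : EuclideanSpace ℝ (Fin 2))
    (hmean : ∫ ω, ‖Dn ω - Dc‖ ^ 2 ∂ℙ = σ ^ 2 / (4 * π))
    (hvar : variance (fun ω => ‖Dn ω - Dc‖ ^ 2) ℙ
      = σ ^ 4 / (16 * π ^ 2) * (1 + 27 / (16 * π))) :
    ∀ k : ℝ, 0 < k →
      1 - 1 / (1 + k ^ 2)
        < (ℙ {ω | |‖Dn ω‖ - ‖Dc‖| < σ * Real.sqrt ((1 + 1.25 * k) / (4 * π))}).toReal := by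
  intro k hk
  have hπ : 0 < π := Real.pi_pos
  have hπ3 : 3 < π := Real.pi_gt_three
  set X : Ω → ℝ := fun ω => ‖Dn ω - Dc‖ ^ 2 with hXdef
  set m : ℝ := σ ^ 2 / (4 * π) with hmdef
  have hm0 : 0 < m := by positivity
  -- X is integrable
  have hXint : Integrable X ℙ := by
    by_contra h
    rw [integral_undef h] at hmean
    exact absurd hmean.symm hm0.ne'
  -- variance value and positivity
  have hvpos : 0 < variance X ℙ := by
    rw [hvar]; positivity
  -- X is in L²
  have hXL2 : MemLp X 2 ℙ := by
    rw [← evariance_lt_top_iff_memLp hXint.aestronglyMeasurable]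
    by_contra h
    push_neg at h
    have : evariance X ℙ = ⊤ := top_le_iff.mp h
    have : variance X ℙ = 0 := by rw [variance, this]; simp
    rw [this] at hvpos; exact lt_irrefl _ hvpos
  set a : ℝ := 1.25 * k * m with hadef
  have ha : 0 < a := by positivity
  have hcant := cantelli_aux hXL2 ha
  rw [hmean] at hcant
  set v : ℝ := variance X ℙ with hvdef
  -- v = m^2 * (1 + 27/(16π))
  have hveq : v = m ^ 2 * (1 + 27 / (16 * π)) := by
    rw [hvar, hmdef]
    field_simp
    ring
  -- threshold squared equals m + a
  set T : ℝ := σ * Real.sqrt ((1 + 1.25 * k) / (4 * π)) with hTdef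
  have hT0 : 0 ≤ T := by positivity
  have hT2 : T ^ 2 = m + a := by
    rw [hTdef, mul_pow, Real.sq_sqrt (by positivity), hmdef, hadef, hmdef]
    field_simp
  -- set inclusion
  have hsub : {ω | X ω < m + a} ⊆ {ω | |‖Dn ω‖ - ‖Dc‖| < T} := by
    intro ω hω
    simp only [Set.mem_setOf_eq] at hω ⊢
    have h1 : ‖Dn ω - Dc‖ < T := by
      refine lt_of_pow_lt_pow_left₀ 2 hT0 ?_
      rw [hT2]; exact hω
    calc |‖Dn ω‖ - ‖Dc‖| ≤ ‖Dn ω - Dc‖ := abs_norm_sub_norm_le _ _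
      _ < T := h1
  -- complement bound
  have hcompl : 1 ≤ (ℙ {ω | X ω < m + a}).toReal + (ℙ {ω | m + a ≤ X ω}).toReal := by
    have hunion : {ω | X ω < m + a} ∪ {ω | m + a ≤ X ω} = Set.univ := by
      ext ω
      simp only [Set.mem_union, Set.mem_setOf_eq, Set.mem_univ, iff_true]
      exact lt_or_ge (X ω) (m + a)
    have hle := measure_union_le (μ := (ℙ : Measure Ω)) {ω | X ω < m + a} {ω | m + a ≤ X ω}
    rw [hunion, measure_univ] at hle
    have h2 := ENNReal.toReal_mono
      (ENNReal.add_ne_top.mpr ⟨measure_ne_top _ _, measure_ne_top _ _⟩) hle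
    rw [ENNReal.toReal_one, ENNReal.toReal_add (measure_ne_top _ _) (measure_ne_top _ _)] at h2
    exact h2
  have hmono : (ℙ {ω | X ω < m + a}).toReal ≤ (ℙ {ω | |‖Dn ω‖ - ‖Dc‖| < T}).toReal :=
    ENNReal.toReal_mono (measure_ne_top _ _) (measure_mono hsub)
  -- final numeric bound: v/(v+a²) < 1/(1+k²)
  have hnum : v / (v + a ^ 2) < 1 / (1 + k ^ 2) := by
    rw [div_lt_div_iff₀ (by positivity) (by positivity)]
    have ha2 : a ^ 2 = 1.5625 * k ^ 2 * m ^ 2 := by rw [hadef]; ring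
    rw [hveq, ha2]
    have h27 : 27 / (16 * π) < 0.5625 := by
      rw [div_lt_iff₀ (by positivity)]; nlinarith
    have hmk : (0:ℝ) < m ^ 2 * k ^ 2 := by positivity
    have hkey := mul_lt_mul_of_pos_right (show (1:ℝ) + 27 / (16 * π) < 1.5625 by linarith) hmk
    nlinarith [hkey]
  calc 1 - 1 / (1 + k ^ 2) < 1 - v / (v + a ^ 2) := by linarith
    _ ≤ 1 - (ℙ {ω | m + a ≤ X ω}).toReal := by linarith [hcant]
    _ ≤ (ℙ {ω | X ω < m + a}).toReal := by linarith
    _ ≤ _ := hmono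
end
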